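/- Mean-aggregation overall bound validity: with disjoint finite index sets I1, I2, I3, bounds l ≤ u, and budget s, define for each feasible pair (s2, s3) (with s2+s3 ≤ s, s2 ≤ |I2|, s3 ≤ |I3|) the quantity M(s2,s3) = 0 if I1 = ∅, s2 = |I2|, s3 = 0, and otherwise M(s2,s3) = (Σ_{i∈I1} u(i) + sum of the (|I2|−s2) largest upper bounds in I2 + sum of the s3 largest upper bounds in I3) / (|I1|+|I2|−s2+s3). Then for every admissible selection S2 ⊆ I2, S3 ⊆ I3 with |I2\S2|+|S3| ≤ s and every l ≤ x ≤ u, the mean of x over I1 ∪ S2 ∪ S3 (with mean over the empty set defined as 0) is at most the maximum of M(s2,s3) over all feasible pairs, and this maximum is attained by some admissible selection and assignment. -/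

import Mathlib

noncomputable def kthLargest (Y : Multiset ℝ) (i : ℕ) : ℝ :=
  ((Y.sort (· ≤ ·)).reverse).getD (i - 1) 0

noncomputable def kthSmallest (Y : Multiset ℝ) (i : ℕ) : ℝ :=
  (Y.sort (· ≤ ·)).getD (i - 1) 0

/-- Mean of `x` over a finset (equal to `0` on the empty set, since `x/0 = 0` in `ℝ`). -/
noncomputable def meanF {ι : Type*} (S : Finset ι) (x : ι → ℝ) : ℝ :=
  (∑ i ∈ S, x i) / S.card

/-- Sum of the `k` largest values of `u` over `J`. -/
noncomputable def topSum {ι : Type*} (J : Finset ι) (u : ι → ℝ) (k : ℕ) : ℝ :=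
  ∑ i ∈ Finset.range k, kthLargest (J.val.map u) (i + 1)


lemma sum_range_getD (l : List ℝ) (k : ℕ) :
    ∑ i ∈ Finset.range k, l.getD i 0 = (l.take k).sum := by
  induction k with
  | zero => simp
  | succ n ih =>
    rw [Finset.sum_range_succ, ih, List.take_succ, List.sum_append]
    congr 1
    rw [List.getD_eq_getElem?_getD]
    rcases h : l[n]? with _ | a <;> simp [h]

lemma topSum_eq {ι : Type*} (J : Finset ι) (u : ι → ℝ) (k : ℕ) :
    topSum J u k = ((((J.val.map u).sort (· ≤ ·)).reverse).take k).sum := by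
  unfold topSum kthLargest
  simp only [Nat.add_sub_cancel]
  exact sum_range_getD _ k

lemma mset_le_cons_of_not_mem {T : Multiset ℝ} {b : ℝ} {t : Multiset ℝ}
    (h : T ≤ b ::ₘ t) (hb : b ∉ T) : T ≤ t := by
  rw [Multiset.le_iff_count] at h ⊢
  intro a
  by_cases hab : a = b
  · subst hab; simp [Multiset.count_eq_zero_of_notMem hb]
  · have := h a
    rwa [Multiset.count_cons_of_ne hab] at this

lemma sum_le_take_of_le {l : List ℝ} (hl : l.Pairwise (fun a b => b ≤ a))
    (T : Multiset ℝ) (hT : T ≤ (l : Multiset ℝ)) :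
    T.sum ≤ (l.take (Multiset.card T)).sum := by
  induction l generalizing T with
  | nil =>
    have : T = 0 := Multiset.le_zero.mp (by simpa using hT)
    simp [this]
  | cons b t ih =>
    rw [List.pairwise_cons] at hl
    obtain ⟨hb_max, hts⟩ := hl
    by_cases hT0 : T = 0
    · simp [hT0]
    · have hcardpos : 0 < Multiset.card T := Multiset.card_pos.mpr hT0
      obtain ⟨m, hm⟩ : ∃ m, Multiset.card T = m + 1 := ⟨Multiset.card T - 1, by omega⟩
      by_cases hb : b ∈ T
      · have h1 : T.erase b ≤ (t : Multiset ℝ) := by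
          have h2 := Multiset.erase_le_erase b hT
          rwa [show ((b :: t : List ℝ) : Multiset ℝ) = b ::ₘ (t : Multiset ℝ) from rfl,
            Multiset.erase_cons_head] at h2
        have ih' := ih hts (T.erase b) h1
        have hc : Multiset.card (T.erase b) = m := by
          rw [Multiset.card_erase_of_mem hb, hm]; rfl
        rw [hc] at ih'
        have hsum : T.sum = b + (T.erase b).sum := by
          conv_lhs => rw [← Multiset.cons_erase hb]
          rw [Multiset.sum_cons]
        rw [hm, hsum]
        show b + (T.erase b).sum ≤ (b :: t.take m).sum
        rw [List.sum_cons]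
        linarith
      · have h1 : T ≤ (t : Multiset ℝ) := mset_le_cons_of_not_mem (by
          rwa [show ((b :: t : List ℝ) : Multiset ℝ) = b ::ₘ (t : Multiset ℝ) from rfl] at hT) hb
        have hlen : Multiset.card T ≤ t.length := by
          have := Multiset.card_le_card h1
          simpa using this
        have ih' := ih hts T h1
        have hmlt : m < t.length := by omega
        rw [hm] at ih' ⊢
        rw [List.sum_take_succ _ _ hmlt] at ih'
        show T.sum ≤ (b :: t.take m).sum
        rw [List.sum_cons]
        have hgetle : t[m] ≤ b := hb_max _ (List.getElem_mem hmlt)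
        linarith

lemma sum_subset_le_topSum {ι : Type*} {J S : Finset ι} (hS : S ⊆ J) (u : ι → ℝ) :
    ∑ i ∈ S, u i ≤ topSum J u S.card := by
  set l := ((J.val.map u).sort (· ≤ ·)).reverse with hl
  have hlm : (l : Multiset ℝ) = J.val.map u := by
    rw [hl]; rw [← Multiset.coe_reverse]; simp [Multiset.sort_eq]
  have hsorted : l.Pairwise (fun a b => b ≤ a) := by
    rw [hl, List.pairwise_reverse]
    exact Multiset.pairwise_sort _ _
  have hT : (S.val.map u) ≤ (l : Multiset ℝ) := by
    rw [hlm]; exact Multiset.map_le_map (Finset.val_le_iff.mpr hS)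
  have := sum_le_take_of_le hsorted (S.val.map u) hT
  rw [topSum_eq]
  simpa using this

lemma exists_of_le_map' {α β : Type*} [DecidableEq α] [DecidableEq β] (s : Multiset β) (t : Multiset α) (f : α → β)
    (h : s ≤ t.map f) : ∃ s' ≤ t, s'.map f = s := by
  induction s using Multiset.induction generalizing t with
  | empty => exact ⟨0, Multiset.zero_le _, rfl⟩
  | cons a s ih =>
    have ha : a ∈ t.map f := Multiset.mem_of_le h (Multiset.mem_cons_self a s)
    obtain ⟨b, hb, hfb⟩ := Multiset.mem_map.mp ha
    have hmap : t.map f = f b ::ₘ (t.erase b).map f := by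
      rw [← Multiset.map_cons, Multiset.cons_erase hb]
    have hs : s ≤ (t.erase b).map f := by
      have h2 := Multiset.erase_le_erase a h
      rwa [Multiset.erase_cons_head, hmap, hfb, Multiset.erase_cons_head] at h2
    obtain ⟨s', hs', hmap'⟩ := ih (t.erase b) hs
    refine ⟨b ::ₘ s', ?_, ?_⟩
    · calc b ::ₘ s' ≤ b ::ₘ t.erase b := Multiset.cons_le_cons b hs'
        _ = t := Multiset.cons_erase hb
    · rw [Multiset.map_cons, hmap', hfb]

lemma exists_subset_topSum {ι : Type*} [DecidableEq ι] (J : Finset ι) (u : ι → ℝ) (k : ℕ) (hk : k ≤ J.card) :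
    ∃ S ⊆ J, S.card = k ∧ ∑ i ∈ S, u i = topSum J u k := by
  set l := ((J.val.map u).sort (· ≤ ·)).reverse with hl
  have hlm : (l : Multiset ℝ) = J.val.map u := by
    rw [hl]; rw [← Multiset.coe_reverse]; simp [Multiset.sort_eq]
  have hlen : l.length = J.card := by
    rw [hl]; simp [Multiset.length_sort]
  have htake : ((l.take k : List ℝ) : Multiset ℝ) ≤ (l : Multiset ℝ) :=
    (List.take_sublist k l).subperm
  rw [hlm] at htake
  obtain ⟨T, hT, hTmap⟩ := exists_of_le_map' _ _ _ htake
  have hnd : T.Nodup := Multiset.nodup_of_le hT J.nodup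
  refine ⟨⟨T, hnd⟩, Finset.val_le_iff.mp hT, ?_, ?_⟩
  · have hc := congrArg Multiset.card hTmap
    simp only [Multiset.card_map, Multiset.coe_card, List.length_take, hlen] at hc
    rw [Finset.card]
    show Multiset.card T = k
    omega
  · have hsum : ∑ i ∈ (⟨T, hnd⟩ : Finset ι), u i = (T.map u).sum := rfl
    rw [hsum, hTmap, topSum_eq]
    rfl

/-- Mean-aggregation overall upper bound validity and attainment: `B` is the
maximum over feasible exact-budget pairs `(s2,s3)` of the fixed-budget bound. -/
theorem stmt18 {ι : Type*} [DecidableEq ι] (I1 I2 I3 : Finset ι)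
    (h12 : Disjoint I1 I2) (h13 : Disjoint I1 I3) (h23 : Disjoint I2 I3)
    (l u : ι → ℝ) (hlu : ∀ i ∈ I1 ∪ I2 ∪ I3, l i ≤ u i) (s : ℕ)
    (B : ℝ)
    (hB : B = sSup {y : ℝ | ∃ s2 s3 : ℕ, s2 + s3 ≤ s ∧ s2 ≤ I2.card ∧ s3 ≤ I3.card ∧
      y = if I1 = (∅ : Finset ι) ∧ s2 = I2.card ∧ s3 = 0 then 0 else
        ((∑ i ∈ I1, u i) + topSum I2 u (I2.card - s2) + topSum I3 u s3) /
          ((I1.card + I2.card - s2 + s3 : ℕ) : ℝ)}) :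
    (∀ S2 ⊆ I2, ∀ S3 ⊆ I3, (I2 \ S2).card + S3.card ≤ s →
      ∀ x : ι → ℝ, (∀ i ∈ I1 ∪ I2 ∪ I3, l i ≤ x i ∧ x i ≤ u i) →
        meanF (I1 ∪ S2 ∪ S3) x ≤ B) ∧
    (∃ S2 ⊆ I2, ∃ S3 ⊆ I3, (I2 \ S2).card + S3.card ≤ s ∧
      ∃ x : ι → ℝ, (∀ i ∈ I1 ∪ I2 ∪ I3, l i ≤ x i ∧ x i ≤ u i) ∧
        meanF (I1 ∪ S2 ∪ S3) x = B) := by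
  classical
  set f : ℕ × ℕ → ℝ := fun p =>
    if I1 = (∅ : Finset ι) ∧ p.1 = I2.card ∧ p.2 = 0 then 0 else
      ((∑ i ∈ I1, u i) + topSum I2 u (I2.card - p.1) + topSum I3 u p.2) /
        ((I1.card + I2.card - p.1 + p.2 : ℕ) : ℝ) with hf
  set F : Finset (ℕ × ℕ) := ((Finset.range (I2.card+1)) ×ˢ (Finset.range (I3.card+1))).filter
    (fun p => p.1 + p.2 ≤ s) with hF
  have hFne : (F.image f).Nonempty := ⟨f (0,0), Finset.mem_image_of_mem f (by simp [hF])⟩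
  have hset : {y : ℝ | ∃ s2 s3 : ℕ, s2 + s3 ≤ s ∧ s2 ≤ I2.card ∧ s3 ≤ I3.card ∧
      y = if I1 = (∅ : Finset ι) ∧ s2 = I2.card ∧ s3 = 0 then 0 else
        ((∑ i ∈ I1, u i) + topSum I2 u (I2.card - s2) + topSum I3 u s3) /
          ((I1.card + I2.card - s2 + s3 : ℕ) : ℝ)} = ↑(F.image f) := by
    ext y
    simp only [Set.mem_setOf_eq, Finset.coe_image, Set.mem_image, Finset.mem_coe, hF,
      Finset.mem_filter, Finset.mem_product, Finset.mem_range, hf]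
    constructor
    · rintro ⟨s2, s3, h1, h2, h3, rfl⟩
      exact ⟨(s2, s3), ⟨⟨by omega, by omega⟩, h1⟩, rfl⟩
    · rintro ⟨⟨s2, s3⟩, ⟨⟨h2, h3⟩, h1⟩, rfl⟩
      exact ⟨s2, s3, h1, by omega, by omega, rfl⟩
  have hB' : B = (F.image f).max' hFne := by
    rw [hB, hset, Finset.Nonempty.csSup_eq_max']
  have hub : ∀ p ∈ F, f p ≤ B := fun p hp =>
    hB' ▸ Finset.le_max' _ _ (Finset.mem_image_of_mem f hp)
  have hmem : ∃ p ∈ F, f p = B := by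
    have := (F.image f).max'_mem hFne
    rw [← hB'] at this
    exact Finset.mem_image.mp this
  -- generic union facts
  have key : ∀ S2 ⊆ I2, ∀ S3 ⊆ I3,
      (I1 ∪ S2 ∪ S3).card = I1.card + S2.card + S3.card ∧
      ∀ x : ι → ℝ, ∑ i ∈ I1 ∪ S2 ∪ S3, x i = ∑ i ∈ I1, x i + ∑ i ∈ S2, x i + ∑ i ∈ S3, x i := by
    intro S2 hS2 S3 hS3
    have d1 : Disjoint I1 S2 := h12.mono_right hS2
    have d2 : Disjoint (I1 ∪ S2) S3 := Finset.disjoint_union_left.mpr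
      ⟨h13.mono_right hS3, h23.mono hS2 hS3⟩
    constructor
    · rw [Finset.card_union_of_disjoint d2, Finset.card_union_of_disjoint d1]
    · intro x
      rw [Finset.sum_union d2, Finset.sum_union d1]
  constructor
  · intro S2 hS2 S3 hS3 hbud x hx
    obtain ⟨hcardU, hsumU⟩ := key S2 hS2 S3 hS3
    set s2 := (I2 \ S2).card with hs2
    set s3 := S3.card with hs3
    have hS2le : S2.card ≤ I2.card := Finset.card_le_card hS2
    have hsd : s2 = I2.card - S2.card := Finset.card_sdiff_of_subset hS2
    have hs3le : s3 ≤ I3.card := Finset.card_le_card hS3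
    have hpF : (s2, s3) ∈ F := by
      simp only [hF, Finset.mem_filter, Finset.mem_product, Finset.mem_range]
      exact ⟨⟨by omega, by omega⟩, hbud⟩
    have hle := hub _ hpF
    have hfval : f (s2, s3) = if I1 = (∅ : Finset ι) ∧ s2 = I2.card ∧ s3 = 0 then 0 else
        ((∑ i ∈ I1, u i) + topSum I2 u (I2.card - s2) + topSum I3 u s3) /
          ((I1.card + I2.card - s2 + s3 : ℕ) : ℝ) := rfl
    rw [hfval] at hle
    refine le_trans ?_ hle
    by_cases hcase : I1 = (∅ : Finset ι) ∧ s2 = I2.card ∧ s3 = 0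
    · rw [if_pos hcase]
      obtain ⟨hI1, hc2, hc3⟩ := hcase
      have hS2e : S2 = ∅ := Finset.card_eq_zero.mp (by omega)
      have hS3e : S3 = ∅ := Finset.card_eq_zero.mp (by omega)
      rw [hI1, hS2e, hS3e]
      simp [meanF]
    · rw [if_neg hcase]
      have hpos : 0 < I1.card + S2.card + S3.card := by
        by_contra hcon
        push_neg at hcon
        have hI1 : I1 = ∅ := Finset.card_eq_zero.mp (by omega)
        exact hcase ⟨hI1, by omega, by omega⟩
      have hden : (I1.card + I2.card - s2 + s3 : ℕ) = (I1 ∪ S2 ∪ S3).card := by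
        rw [hcardU]; omega
      rw [hden]
      have hnum : ∑ i ∈ I1 ∪ S2 ∪ S3, x i ≤
          (∑ i ∈ I1, u i) + topSum I2 u (I2.card - s2) + topSum I3 u s3 := by
        rw [hsumU x]
        have hx1 : ∑ i ∈ I1, x i ≤ ∑ i ∈ I1, u i := Finset.sum_le_sum
          (fun i hi => (hx i (Finset.mem_union_left _ (Finset.mem_union_left _ hi))).2)
        have hx2 : ∑ i ∈ S2, x i ≤ ∑ i ∈ S2, u i := Finset.sum_le_sum
          (fun i hi => (hx i (Finset.mem_union_left _ (Finset.mem_union_right _ (hS2 hi)))).2)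
        have hx3 : ∑ i ∈ S3, x i ≤ ∑ i ∈ S3, u i := Finset.sum_le_sum
          (fun i hi => (hx i (Finset.mem_union_right _ (hS3 hi))).2)
        have ht2 : ∑ i ∈ S2, u i ≤ topSum I2 u (I2.card - s2) := by
          have : I2.card - s2 = S2.card := by omega
          rw [this]
          exact sum_subset_le_topSum hS2 u
        have ht3 : ∑ i ∈ S3, u i ≤ topSum I3 u s3 := sum_subset_le_topSum hS3 u
        linarith
      rw [meanF]
      have hposU : (0 : ℝ) < ((I1 ∪ S2 ∪ S3).card : ℝ) := by
        rw [hcardU]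
        exact_mod_cast hpos
      exact div_le_div_of_nonneg_right hnum hposU.le
  · obtain ⟨⟨s2, s3⟩, hpF, hpB⟩ := hmem
    have hcon : s2 + s3 ≤ s ∧ s2 < I2.card + 1 ∧ s3 < I3.card + 1 := by
      simp only [hF, Finset.mem_filter, Finset.mem_product, Finset.mem_range] at hpF
      exact ⟨hpF.2, hpF.1.1, hpF.1.2⟩
    obtain ⟨h1, h2, h3⟩ := hcon
    have hfval : f (s2, s3) = if I1 = (∅ : Finset ι) ∧ s2 = I2.card ∧ s3 = 0 then 0 else
        ((∑ i ∈ I1, u i) + topSum I2 u (I2.card - s2) + topSum I3 u s3) /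
          ((I1.card + I2.card - s2 + s3 : ℕ) : ℝ) := rfl
    rw [hfval] at hpB
    by_cases hcase : I1 = (∅ : Finset ι) ∧ s2 = I2.card ∧ s3 = 0
    · rw [if_pos hcase] at hpB
      refine ⟨∅, Finset.empty_subset _, ∅, Finset.empty_subset _, ?_, u,
        fun i hi => ⟨hlu i hi, le_refl _⟩, ?_⟩
      · simp only [Finset.sdiff_empty, Finset.card_empty, add_zero]
        omega
      · rw [hcase.1, ← hpB]
        simp [meanF]
    · rw [if_neg hcase] at hpB
      obtain ⟨S2, hS2, hS2card, hS2sum⟩ := exists_subset_topSum I2 u (I2.card - s2) (by omega)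
      obtain ⟨S3, hS3, hS3card, hS3sum⟩ := exists_subset_topSum I3 u s3 (by omega)
      obtain ⟨hcardU, hsumU⟩ := key S2 hS2 S3 hS3
      refine ⟨S2, hS2, S3, hS3, ?_, u, fun i hi => ⟨hlu i hi, le_refl _⟩, ?_⟩
      · rw [Finset.card_sdiff_of_subset hS2, hS2card, hS3card]; omega
      · rw [← hpB, meanF, hsumU u, hS2sum, hS3sum, hcardU, hS2card, hS3card]
        have hden : I1.card + (I2.card - s2) + s3 = I1.card + I2.card - s2 + s3 := by omega
        rw [hden]
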